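/- Let μ be an instance of REP over Σ with words u_start, u_end and rules w_i → w'_i for 1 ≤ i ≤ n. There exists an overlapping solution h to the equation α_μ = β_μ if and only if μ satisfies REP. -/

import Mathlib

/-!
Framework for REP (Rewriting with Programmed Rules) and the associated word
equations α_μ = β_μ.  Constants: `Option A` models Σ ∪ {#}, where `none` is the
fresh letter `#` and `some a` embeds a ∈ Σ.  Variables are modelled by `ℕ`
(the variable x_i is `i`).
-/

namespace REP

/-- `u_end` is obtained from `u_start` by applying each of the `n` rules
`w i → w' i` (for `i = 1, …, n`) once, in order, each application replacing one
occurrence of `w i` by `w' i`. -/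
def SatisfiesREP {A : Type} (n : ℕ) (ustart uend : List A) (w w' : ℕ → List A) : Prop :=
  ∃ u : ℕ → List A, u 0 = ustart ∧ u n = uend ∧
    ∀ i, 1 ≤ i → i ≤ n → ∃ s t : List A,
      u (i - 1) = s ++ w i ++ t ∧ u i = s ++ w' i ++ t

/-- Apply a substitution (identity on constants) to a pattern. -/
def applySub {A : Type} (h : ℕ → List (Option A)) : List (Option A ⊕ ℕ) → List (Option A)
  | [] => []
  | Sum.inl a :: rest => a :: applySub h rest
  | Sum.inr x :: rest => h x ++ applySub h rest

/-- Embed a constant word over Σ into patterns over Σ ∪ {#}. -/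
def lift {A : Type} (u : List A) : List (Option A ⊕ ℕ) := u.map (fun a => Sum.inl (some a))

/-- Embed a constant word over Σ into words over Σ ∪ {#}. -/
def liftW {A : Type} (u : List A) : List (Option A) := u.map some

/-- The fresh letter `#` as a pattern symbol. -/
def hash {A : Type} : Option A ⊕ ℕ := Sum.inl none

/-- `x_1 w_1 x_2 w_2 ⋯ x_n w_n`. -/
def blocks {A : Type} (w : ℕ → List A) : ℕ → List (Option A ⊕ ℕ)
  | 0 => []
  | n + 1 => blocks w n ++ (Sum.inr (n + 1) :: lift (w (n + 1)))

/-- α_μ = `x_1 w_1 x_2 w_2 ⋯ x_n w_n x_{n+1} # u_end`. -/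
def alphaMu {A : Type} (n : ℕ) (uend : List A) (w : ℕ → List A) : List (Option A ⊕ ℕ) :=
  blocks w n ++ [Sum.inr (n + 1), hash] ++ lift uend

/-- β_μ = `# u_start x_1 w'_1 x_2 w'_2 ⋯ x_n w'_n x_{n+1}`. -/
def betaMu {A : Type} (n : ℕ) (ustart : List A) (w' : ℕ → List A) : List (Option A ⊕ ℕ) :=
  hash :: lift ustart ++ blocks w' n ++ [Sum.inr (n + 1)]

/-- `x_1 w_1 ⋯ x_i w_i`. -/
def alphaPrefix {A : Type} (w : ℕ → List A) (i : ℕ) : List (Option A ⊕ ℕ) := blocks w i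

/-- `# u_start x_1 w'_1 ⋯ w'_{i-1} x_i`. -/
def betaPrefix {A : Type} (ustart : List A) (w' : ℕ → List A) (i : ℕ) :
    List (Option A ⊕ ℕ) :=
  hash :: lift ustart ++ blocks w' (i - 1) ++ [Sum.inr i]

/-- `h` is a solution of the equation α = β. -/
def IsSolution {A : Type} (h : ℕ → List (Option A)) (α β : List (Option A ⊕ ℕ)) : Prop :=
  applySub h α = applySub h β

/-- `h` is an overlapping solution of α_μ = β_μ : it is a solution and, for every
`1 ≤ i ≤ n`, there is `z_i` such that `w_i z_i` is a suffix of `h(x_i)` and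
`h(# u_start x_1 w'_1 ⋯ w'_{i-1} x_i) = h(x_1 w_1 ⋯ x_i w_i) z_i`. -/
def OverlappingSolution {A : Type} (n : ℕ) (ustart uend : List A) (w w' : ℕ → List A)
    (h : ℕ → List (Option A)) : Prop :=
  IsSolution h (alphaMu n uend w) (betaMu n ustart w') ∧
  ∀ i, 1 ≤ i → i ≤ n → ∃ z : List (Option A),
    (liftW (w i) ++ z) <:+ h i ∧
    applySub h (betaPrefix ustart w' i) = applySub h (alphaPrefix w i) ++ z

/-- `n`-fold concatenation `u^n` of the word `u`. -/
def npow {A : Type} (u : List A) : ℕ → List A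
  | 0 => []
  | n + 1 => u ++ npow u n

/-- `y_i`, the suffix of `h(x_i)` of length `|v_i| - |w_i|`. -/
def ySuf {A : Type} (h : ℕ → List (Option A)) (v : ℕ → List (Option A)) (w : ℕ → List A)
    (i : ℕ) : List (Option A) :=
  (h i).drop ((h i).length - ((v i).length - (w i).length))

/-- Two words are conjugate if `u = st` and `v = ts` for some words `s`, `t`. -/
def Conj {B : Type} (u v : List B) : Prop := ∃ s t : List B, u = s ++ t ∧ v = t ++ s

/-- The words `v_1, …, v_n` associated with an overlapping solution `h`
(as guaranteed by the characterisation of overlapping solutions):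
`v_i` is a prefix of `h(x_i)`, `|w_i| ≤ |v_i|`, `h(x_i) w_i` is a prefix of `v_i^ω`
(i.e. of `v_i^m` for all sufficiently large `m`), `v_1 = # u_start`,
`v_i = y_{i-1} w'_{i-1}` for `2 ≤ i ≤ n`, and `y_n w'_n h(x_{n+1}) = h(x_{n+1}) # u_end`. -/
def AssocWords {A : Type} (n : ℕ) (ustart uend : List A) (w w' : ℕ → List A)
    (h : ℕ → List (Option A)) (v : ℕ → List (Option A)) : Prop :=
  (∀ i, 1 ≤ i → i ≤ n →
    v i <+: h i ∧ (w i).length ≤ (v i).length ∧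
    ∃ N : ℕ, ∀ m : ℕ, N ≤ m → (h i ++ liftW (w i)) <+: npow (v i) m) ∧
  v 1 = none :: liftW ustart ∧
  (∀ i, 2 ≤ i → i ≤ n → v i = ySuf h v w (i - 1) ++ liftW (w' (i - 1))) ∧
  ySuf h v w n ++ liftW (w' n) ++ h (n + 1) = h (n + 1) ++ none :: liftW uend

end REP

namespace REPAux




/-- conjugacy extraction -/
lemma conj_words {B : Type} (u : List B) :
    ∀ k (x v : List B), x.length ≤ k → u ++ x = x ++ v →
      ∃ p q : List B, u = p ++ q ∧ v = q ++ p := by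
  intro k
  induction k with
  | zero =>
    intro x v hk heq
    have hx : x = [] := List.length_eq_zero_iff.mp (Nat.le_zero.mp hk)
    subst hx
    simp only [List.append_nil, List.nil_append] at heq
    exact ⟨u, [], by simp, by simp [heq]⟩
  | succ k ih =>
    intro x v hk heq
    rcases eq_or_ne u [] with hu | hu
    · subst hu
      simp only [List.nil_append] at heq
      have : v = [] := by
        have h2 := congrArg List.length heq
        simp only [List.length_append] at h2
        exact List.length_eq_zero_iff.mp (by omega)
      exact ⟨[], [], by simp, by simp [this]⟩
    by_cases hlen : x.length ≤ u.length
    · have hx1 : x <+: u ++ x := heq ▸ ⟨v, rfl⟩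
      have hx2 : x <+: u := List.prefix_of_prefix_length_le hx1 (u.prefix_append x) hlen
      obtain ⟨q, rfl⟩ := hx2
      refine ⟨x, q, rfl, ?_⟩
      have : x ++ (q ++ x) = x ++ v := by simpa using heq
      exact (List.append_cancel_left this).symm
    · have hu1 : u <+: x := by
        exact List.prefix_of_prefix_length_le (heq ▸ u.prefix_append x)
          (x.prefix_append v) (le_of_not_ge hlen)
      obtain ⟨x', rfl⟩ := hu1
      have heq' : u ++ x' = x' ++ v := by
        have : u ++ (u ++ x') = u ++ (x' ++ v) := by simpa using heq
        exact List.append_cancel_left this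
      have hlen' : x'.length ≤ k := by
        have hup : 0 < u.length := List.length_pos_iff.mpr hu
        have : u.length + x'.length ≤ k + 1 := by simpa using hk
        omega
      exact ih x' v hlen' heq'

lemma split_none {A : Type} :
    ∀ (X Y z Z : List (Option A)), (none ∉ X) → (none ∉ Y) →
      X ++ z = Y ++ none :: Z → ∃ Y2, Y = X ++ Y2 ∧ z = Y2 ++ none :: Z := by
  intro X
  induction X with
  | nil => exact fun Y z Z _ _ h => ⟨Y, by simp, h⟩
  | cons a X ih =>
    intro Y z Z hX hY h
    cases Y with
    | nil =>
      simp only [List.nil_append, List.cons_append] at h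
      have : a = none := (List.cons_eq_cons.mp h).1
      exact absurd (this ▸ List.mem_cons_self (a := a) (l := X)) hX
    | cons b Y =>
      simp only [List.cons_append] at h
      obtain ⟨hab, h⟩ := List.cons_eq_cons.mp h
      obtain ⟨Y2, h1, h2⟩ := ih Y z Z (fun hm => hX (List.mem_cons_of_mem _ hm))
        (fun hm => hY (List.mem_cons_of_mem _ hm)) h
      exact ⟨Y2, by rw [h1, hab]; rfl, h2⟩


open REP

lemma liftW_append {A : Type} (a b : List A) : liftW (a ++ b) = liftW a ++ liftW b :=
  List.map_append

lemma none_not_mem_liftW {A : Type} (a : List A) : (none : Option A) ∉ liftW a := by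
  simp [liftW]

lemma liftW_inj {A : Type} {a b : List A} (h : liftW a = liftW b) : a = b :=
  List.map_injective_iff.mpr (Option.some_injective A) h

lemma liftW_eq_append {A : Type} {u : List A} {a b : List (Option A)}
    (h : liftW u = a ++ b) : ∃ u1 u2, u = u1 ++ u2 ∧ liftW u1 = a ∧ liftW u2 = b :=
  List.map_eq_append_iff.mp h

/-- KEY lemma -/
lemma key_lemma {A : Type} (u w : List A) (X z : List (Option A))
    (h : (none :: liftW u) ++ X = X ++ (liftW w ++ z)) :
    ∃ s t : List A, z = liftW t ++ none :: liftW s ∧ u = s ++ w ++ t := by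
  obtain ⟨p, q, hpq, hz⟩ := conj_words (none :: liftW u) X.length X (liftW w ++ z) le_rfl h
  cases p with
  | nil =>
    simp only [List.nil_append, List.append_nil] at hpq hz
    rw [← hpq] at hz
    cases w with
    | nil =>
      refine ⟨u, [], ?_, by simp⟩
      simpa [liftW] using hz
    | cons a w0 =>
      exfalso
      simp [liftW] at hz
  | cons P0 p' =>
    simp only [List.cons_append] at hpq
    obtain ⟨hP0, hU⟩ := List.cons_eq_cons.mp hpq
    obtain ⟨u1, u2, hu12, hp', hq⟩ := liftW_eq_append hU
    rw [← hP0, ← hp', ← hq] at hz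
    obtain ⟨Y2, hY1, hY2⟩ := split_none (liftW w) (liftW u2) z (liftW u1)
      (none_not_mem_liftW w) (none_not_mem_liftW u2) hz
    obtain ⟨a, b, hab, ha, hb⟩ := liftW_eq_append hY1
    have haw : a = w := liftW_inj ha
    exact ⟨u1, b, by rw [hY2, ← hb], by simp [hu12, hab, haw]⟩

/-- End lemma -/
lemma end_lemma {A : Type} (u v : List A) (X : List (Option A))
    (h : (none :: liftW u) ++ X = X ++ (none :: liftW v)) : u = v := by
  obtain ⟨p, q, hpq, hz⟩ := conj_words (none :: liftW u) X.length X (none :: liftW v) le_rfl h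
  cases p with
  | nil =>
    simp only [List.nil_append, List.append_nil] at hpq hz
    exact liftW_inj (List.cons_eq_cons.mp (hz.trans hpq.symm)).2.symm
  | cons P0 p' =>
    simp only [List.cons_append] at hpq
    obtain ⟨hP0, hU⟩ := List.cons_eq_cons.mp hpq
    cases q with
    | nil =>
      simp only [List.append_nil] at hU
      simp only [List.nil_append] at hz
      obtain ⟨_, hv⟩ := List.cons_eq_cons.mp hz
      exact liftW_inj (hU.trans hv.symm)
    | cons c q' =>
      exfalso
      have hc : c = none := by
        have := hz
        simp only [List.cons_append] at this
        exact ((List.cons_eq_cons.mp this).1).symm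
      have : (none : Option A) ∈ liftW u := by
        rw [hU]
        exact List.mem_append_right _ (hc ▸ List.mem_cons_self (a := c) (l := q'))
      exact none_not_mem_liftW u this

lemma applySub_append {A : Type} (h : ℕ → List (Option A)) (α β : List (Option A ⊕ ℕ)) :
    applySub h (α ++ β) = applySub h α ++ applySub h β := by
  induction α with
  | nil => rfl
  | cons a rest ih => cases a <;> simp [applySub, ih]

lemma applySub_lift {A : Type} (h : ℕ → List (Option A)) (u : List A) :
    applySub h (lift u) = liftW u := by
  induction u with
  | nil => rfl
  | cons a rest ih => simp [lift, liftW, applySub] at ih ⊢; exact ih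

lemma applySub_blocks_succ {A : Type} (h : ℕ → List (Option A)) (w : ℕ → List A) (k : ℕ) :
    applySub h (blocks w (k + 1)) = applySub h (blocks w k) ++ h (k + 1) ++ liftW (w (k + 1)) := by
  simp [blocks, applySub_append, applySub, applySub_lift, List.append_assoc]

lemma hash_def {A : Type} : (hash : Option A ⊕ ℕ) = Sum.inl none := rfl

lemma applySub_betaPrefix {A : Type} (h : ℕ → List (Option A)) (ustart : List A)
    (w' : ℕ → List A) (i : ℕ) :
    applySub h (betaPrefix ustart w' i) =
      none :: (liftW ustart ++ applySub h (blocks w' (i - 1)) ++ h i) := by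
  simp [betaPrefix, hash_def, applySub, applySub_append, applySub_lift, List.append_assoc]

lemma applySub_alphaMu {A : Type} (h : ℕ → List (Option A)) (uend : List A)
    (w : ℕ → List A) (n : ℕ) :
    applySub h (alphaMu n uend w) =
      applySub h (blocks w n) ++ (h (n + 1) ++ none :: liftW uend) := by
  simp [alphaMu, hash_def, applySub_append, applySub, applySub_lift, List.append_assoc]

lemma applySub_betaMu_eq {A : Type} (h : ℕ → List (Option A)) (ustart : List A)
    (w' : ℕ → List A) (m : ℕ) :
    applySub h (betaMu (m + 1) ustart w') =
      applySub h (betaPrefix ustart w' (m + 1)) ++ (liftW (w' (m + 1)) ++ h (m + 2)) := by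
  rw [applySub_betaPrefix]
  simp only [Nat.add_sub_cancel]
  simp [betaMu, hash_def, applySub_append, applySub, applySub_lift,
    applySub_blocks_succ, List.append_assoc]

lemma betaPrefix_succ_applySub {A : Type} (h : ℕ → List (Option A)) (ustart : List A)
    (w' : ℕ → List A) (k : ℕ) :
    applySub h (betaPrefix ustart w' (k + 2)) =
      applySub h (betaPrefix ustart w' (k + 1)) ++ (liftW (w' (k + 1)) ++ h (k + 2)) := by
  rw [applySub_betaPrefix, applySub_betaPrefix]
  have e : k + 2 - 1 = k + 1 := by omega
  rw [e]
  simp only [Nat.add_sub_cancel]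
  rw [applySub_blocks_succ]
  simp [List.append_assoc]

lemma forward_aux {A : Type} (n : ℕ) (ustart : List A) (w w' : ℕ → List A)
    (h z : ℕ → List (Option A))
    (hz : ∀ i, 1 ≤ i → i ≤ n →
      applySub h (betaPrefix ustart w' i) = applySub h (blocks w i) ++ z i) :
    ∀ i, 1 ≤ i → i ≤ n → ∃ uf : ℕ → List A, uf 0 = ustart ∧
      (∀ j, 1 ≤ j → j ≤ i → ∃ s t, uf (j - 1) = s ++ w j ++ t ∧ uf j = s ++ w' j ++ t) ∧
      ∃ X, (none :: liftW (uf i)) ++ X = X ++ (z i ++ liftW (w' i)) := by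
  intro i hi1
  induction i, hi1 using Nat.le_induction with
  | base =>
    intro h1n
    have hq := hz 1 le_rfl h1n
    rw [applySub_betaPrefix] at hq
    have hq' : (none :: liftW ustart) ++ h 1 = h 1 ++ (liftW (w 1) ++ z 1) := by
      have e2 : applySub h (blocks w 1) = h 1 ++ liftW (w 1) := by
        have := applySub_blocks_succ h w 0
        simpa [blocks, applySub] using this
      rw [e2] at hq
      have e1 : applySub h (blocks w' (1 - 1)) = [] := rfl
      rw [e1] at hq
      simpa [List.append_assoc] using hq
    obtain ⟨s, t, hzdef, hust⟩ := key_lemma ustart (w 1) (h 1) (z 1) hq'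
    refine ⟨fun j => if j = 0 then ustart else s ++ w' 1 ++ t, rfl, ?_, ?_⟩
    · intro j hj1 hj2
      have : j = 1 := le_antisymm hj2 hj1
      subst this
      exact ⟨s, t, by simpa using hust, by simp⟩
    · refine ⟨none :: (liftW s ++ liftW (w' 1)), ?_⟩
      simp [hzdef, hust, liftW_append, List.append_assoc]
  | succ i hi ih =>
    intro hin
    obtain ⟨k, rfl⟩ : ∃ k, i = k + 1 := ⟨i - 1, by omega⟩
    obtain ⟨uf, huf0, hufREP, X, hX⟩ := ih (by omega)
    have hQi := hz (k + 1) (by omega) (by omega)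
    have hQs := hz (k + 2) (by omega) (by omega)
    rw [betaPrefix_succ_applySub, hQi, applySub_blocks_succ h w (k + 1)] at hQs
    simp only [List.append_assoc] at hQs
    have cross : z (k + 1) ++ (liftW (w' (k + 1)) ++ h (k + 2)) =
        h (k + 2) ++ (liftW (w (k + 2)) ++ z (k + 2)) :=
      List.append_cancel_left hQs
    have hXstep : (none :: liftW (uf (k + 1))) ++ (X ++ h (k + 2)) =
        (X ++ h (k + 2)) ++ (liftW (w (k + 2)) ++ z (k + 2)) := by
      have h1 : (none :: liftW (uf (k + 1))) ++ (X ++ h (k + 2)) =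
          X ++ (z (k + 1) ++ (liftW (w' (k + 1)) ++ h (k + 2))) := by
        rw [← List.append_assoc, hX]
        simp [List.append_assoc]
      rw [h1, cross]
      simp [List.append_assoc]
    obtain ⟨s, t, hzdef, hust⟩ :=
      key_lemma (uf (k + 1)) (w (k + 2)) (X ++ h (k + 2)) (z (k + 2)) hXstep
    refine ⟨fun j => if j = k + 2 then s ++ w' (k + 2) ++ t else uf j, ?_, ?_, ?_⟩
    · beta_reduce
      rw [if_neg (by omega)]
      exact huf0
    · intro j hj1 hj2
      beta_reduce
      rcases Nat.lt_or_ge j (k + 2) with hj | hj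
      · obtain ⟨s', t', h1, h2⟩ := hufREP j hj1 (by omega)
        refine ⟨s', t', ?_, ?_⟩
        · rw [if_neg (by omega)]; exact h1
        · rw [if_neg (by omega)]; exact h2
      · have hjk : j = k + 2 := by omega
        subst hjk
        refine ⟨s, t, ?_, ?_⟩
        · have e : k + 2 - 1 = k + 1 := by omega
          rw [e, if_neg (by omega)]
          exact hust
        · rw [if_pos rfl]
    · refine ⟨none :: (liftW s ++ liftW (w' (k + 2))), ?_⟩
      beta_reduce
      have e : k + 1 + 1 = k + 2 := by omega
      rw [e, if_pos rfl, hzdef]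
      simp [liftW_append, List.append_assoc]

/-- The canonical overlapping solution built from a REP witness. -/
def solFun {A : Type} (m : ℕ) (u s t : ℕ → List A) : ℕ → List (Option A) := fun j =>
  if j = m + 2 then liftW (t (m + 1))
  else if j = 1 then none :: (liftW (u 0) ++ none :: liftW (s 1))
  else liftW (t (j - 1)) ++ none :: (liftW (u (j - 1)) ++ none :: liftW (s j))

lemma solFun_one {A : Type} (m : ℕ) (u s t : ℕ → List A) :
    solFun m u s t 1 = none :: (liftW (u 0) ++ none :: liftW (s 1)) := by
  rw [solFun, if_neg (by omega), if_pos rfl]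

lemma solFun_last {A : Type} (m : ℕ) (u s t : ℕ → List A) :
    solFun m u s t (m + 2) = liftW (t (m + 1)) := by
  rw [solFun, if_pos rfl]

lemma solFun_mid {A : Type} (m : ℕ) (u s t : ℕ → List A) (j : ℕ) (h1 : 2 ≤ j)
    (h2 : j ≤ m + 1) :
    solFun m u s t j =
      liftW (t (j - 1)) ++ none :: (liftW (u (j - 1)) ++ none :: liftW (s j)) := by
  rw [solFun, if_neg (by omega), if_neg (by omega)]

lemma backward_main {A : Type} (m : ℕ) (u s t : ℕ → List A) (ustart : List A)
    (w w' : ℕ → List A) (hu0 : u 0 = ustart)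
    (hst : ∀ i, 1 ≤ i → i ≤ m + 1 → u (i - 1) = s i ++ w i ++ t i ∧ u i = s i ++ w' i ++ t i) :
    ∀ i, 1 ≤ i → i ≤ m + 1 →
      applySub (solFun m u s t) (betaPrefix ustart w' i) =
        applySub (solFun m u s t) (blocks w i) ++ (liftW (t i) ++ none :: liftW (s i)) := by
  intro i hi1
  induction i, hi1 using Nat.le_induction with
  | base =>
    intro h1
    rw [applySub_betaPrefix]
    have e2 : applySub (solFun m u s t) (blocks w 1) = solFun m u s t 1 ++ liftW (w 1) := by
      simpa [blocks, applySub] using applySub_blocks_succ (solFun m u s t) w 0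
    rw [e2]
    have e1 : applySub (solFun m u s t) (blocks w' (1 - 1)) = [] := rfl
    rw [e1, solFun_one]
    obtain ⟨ha, _⟩ := hst 1 le_rfl h1
    rw [show (1 : ℕ) - 1 = 0 from rfl] at ha
    rw [← hu0, ha]
    simp [liftW_append, List.append_assoc]
  | succ i hi ih =>
    intro hin
    obtain ⟨k, rfl⟩ : ∃ k, i = k + 1 := ⟨i - 1, by omega⟩
    rw [show k + 1 + 1 = k + 2 from by omega] at hin ⊢
    have e3 : applySub (solFun m u s t) (blocks w (k + 2)) =
        applySub (solFun m u s t) (blocks w (k + 1)) ++ solFun m u s t (k + 2) ++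
          liftW (w (k + 2)) := by
      have h3 := applySub_blocks_succ (solFun m u s t) w (k + 1)
      rw [show k + 1 + 1 = k + 2 from by omega] at h3
      exact h3
    rw [betaPrefix_succ_applySub, ih (by omega), e3]
    simp only [List.append_assoc]
    congr 1
    rw [solFun_mid m u s t (k + 2) (by omega) (by omega),
      show k + 2 - 1 = k + 1 from by omega]
    obtain ⟨_, hb1⟩ := hst (k + 1) (by omega) (by omega)
    obtain ⟨ha2, _⟩ := hst (k + 2) (by omega) (by omega)
    rw [show k + 2 - 1 = k + 1 from by omega] at ha2
    conv_lhs => rw [ha2]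
    conv_rhs => rw [hb1]
    simp [liftW_append, List.append_assoc]

end REPAux

/-!
STATEMENT 4: α_μ = β_μ admits an overlapping solution iff μ satisfies REP.
-/

open REP in
theorem stmt4 (A : Type) (n : ℕ) (ustart uend : List A) (w w' : ℕ → List A) :
    (∃ h : ℕ → List (Option A), OverlappingSolution n ustart uend w w' h) ↔
    SatisfiesREP n ustart uend w w' := by
  constructor
  · rintro ⟨h, hsol, hover⟩
    have hsol' : applySub h (alphaMu n uend w) = applySub h (betaMu n ustart w') := hsol
    have hzex : ∀ i, ∃ zi, 1 ≤ i → i ≤ n →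
        applySub h (betaPrefix ustart w' i) = applySub h (blocks w i) ++ zi := by
      intro i
      by_cases hi : 1 ≤ i ∧ i ≤ n
      · obtain ⟨zi, _, h2⟩ := hover i hi.1 hi.2
        exact ⟨zi, fun _ _ => h2⟩
      · exact ⟨[], fun ha hb => absurd ⟨ha, hb⟩ hi⟩
    choose z hz using hzex
    rcases Nat.eq_zero_or_pos n with hn | hn
    · subst hn
      rw [REPAux.applySub_alphaMu] at hsol'
      have hb : applySub h (betaMu 0 ustart w') = (none :: liftW ustart) ++ h 1 := by
        simp [betaMu, REPAux.hash_def, REPAux.applySub_append, applySub,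
          REPAux.applySub_lift, blocks]
      rw [hb] at hsol'
      have hs : h 1 ++ (none :: liftW uend) = (none :: liftW ustart) ++ h 1 := by
        simpa [blocks, applySub] using hsol'
      have hue : ustart = uend := REPAux.end_lemma ustart uend (h 1) hs.symm
      exact ⟨fun _ => ustart, rfl, hue, fun j hj1 hj2 => absurd hj2 (by omega)⟩
    · obtain ⟨m, rfl⟩ : ∃ m, n = m + 1 := ⟨n - 1, by omega⟩
      obtain ⟨uf, huf0, hufREP, X, hX⟩ :=
        REPAux.forward_aux (m + 1) ustart w w' h z hz (m + 1) (by omega) le_rfl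
      have hfin : h (m + 2) ++ (none :: liftW uend) =
          z (m + 1) ++ (liftW (w' (m + 1)) ++ h (m + 2)) := by
        rw [REPAux.applySub_alphaMu, REPAux.applySub_betaMu_eq,
          hz (m + 1) (by omega) le_rfl] at hsol'
        simp only [List.append_assoc] at hsol'
        exact List.append_cancel_left hsol'
      have hlast : uf (m + 1) = uend := by
        apply REPAux.end_lemma _ _ (X ++ h (m + 2))
        calc (none :: liftW (uf (m + 1))) ++ (X ++ h (m + 2))
            = ((none :: liftW (uf (m + 1))) ++ X) ++ h (m + 2) := by
              simp [List.append_assoc]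
          _ = (X ++ (z (m + 1) ++ liftW (w' (m + 1)))) ++ h (m + 2) := by rw [hX]
          _ = X ++ (z (m + 1) ++ (liftW (w' (m + 1)) ++ h (m + 2))) := by
              simp [List.append_assoc]
          _ = X ++ (h (m + 2) ++ (none :: liftW uend)) := by rw [← hfin]
          _ = (X ++ h (m + 2)) ++ (none :: liftW uend) := by
              simp [List.append_assoc]
      exact ⟨uf, huf0, hlast, hufREP⟩
  · rintro ⟨u, hu0, hun, hstep⟩
    rcases Nat.eq_zero_or_pos n with hn | hn
    · subst hn
      have hue : ustart = uend := hu0.symm.trans hun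
      refine ⟨fun _ => [], ?_, fun i hi1 hi2 => absurd hi2 (by omega)⟩
      show applySub _ (alphaMu 0 uend w) = applySub _ (betaMu 0 ustart w')
      simp [alphaMu, betaMu, REPAux.hash_def, REPAux.applySub_append, applySub,
        REPAux.applySub_lift, blocks, hue]
    · obtain ⟨m, rfl⟩ : ∃ m, n = m + 1 := ⟨n - 1, by omega⟩
      have hstep' : ∀ i, ∃ s t : List A, 1 ≤ i → i ≤ m + 1 →
          u (i - 1) = s ++ w i ++ t ∧ u i = s ++ w' i ++ t := by
        intro i
        by_cases hi : 1 ≤ i ∧ i ≤ m + 1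
        · obtain ⟨s, t, h1, h2⟩ := hstep i hi.1 hi.2
          exact ⟨s, t, fun _ _ => ⟨h1, h2⟩⟩
        · exact ⟨[], [], fun ha hb => absurd ⟨ha, hb⟩ hi⟩
      choose s t hst using hstep'
      have hst' : ∀ i, 1 ≤ i → i ≤ m + 1 →
          u (i - 1) = s i ++ w i ++ t i ∧ u i = s i ++ w' i ++ t i :=
        fun i h1 h2 => hst i h1 h2
      have hmain := REPAux.backward_main m u s t ustart w w' hu0 hst'
      refine ⟨REPAux.solFun m u s t, ?_, ?_⟩
      · show applySub _ (alphaMu (m + 1) uend w) = applySub _ (betaMu (m + 1) ustart w')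
        rw [REPAux.applySub_alphaMu, REPAux.applySub_betaMu_eq,
          hmain (m + 1) (by omega) le_rfl]
        simp only [List.append_assoc]
        congr 1
        rw [REPAux.solFun_last]
        obtain ⟨_, hb⟩ := hst' (m + 1) (by omega) le_rfl
        rw [← hun]
        conv_lhs => rw [hb]
        simp [REPAux.liftW_append, List.append_assoc]
      · intro i hi1 hi2
        refine ⟨liftW (t i) ++ none :: liftW (s i), ?_, hmain i hi1 hi2⟩
        obtain ⟨ha, _⟩ := hst' i hi1 hi2
        rcases Nat.lt_or_ge i 2 with hi | hi
        · have : i = 1 := by omega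
          subst this
          rw [show (1 : ℕ) - 1 = 0 from rfl] at ha
          refine ⟨none :: liftW (s 1), ?_⟩
          rw [REPAux.solFun_one, ha]
          simp [REPAux.liftW_append, List.append_assoc]
        · refine ⟨liftW (t (i - 1)) ++ none :: liftW (s i), ?_⟩
          rw [REPAux.solFun_mid m u s t i hi hi2, ha]
          simp [REPAux.liftW_append, List.append_assoc]
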